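/- The modules Ω(λ, α, β, γ) and Δ(λ, α, β, γ) over the affine-Virasoro algebra of type A₁ are simple for all λ, α ∈ ℂ \ {0} and β, γ ∈ ℂ. -/

import Mathlib

open MvPolynomial

abbrev R2 : Type := MvPolynomial (Fin 2) ℂ

/-- Substitution `g(s,t) ↦ g(s - u, t + v)`. -/
noncomputable def sh (u v : ℂ) : R2 →ₐ[ℂ] R2 := aeval ![X 0 - C u, X 1 + C v]

/-- Action of `e_i` in `Ω(λ,α,β,γ)`. -/
noncomputable def omE (lam a : ℂ) (i : ℤ) (g : R2) : R2 :=
  C (lam ^ i * a) * sh (i : ℂ) (-2) g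

/-- Action of `f_i` in `Ω(λ,α,β,γ)`. -/
noncomputable def omF (lam a b : ℂ) (i : ℤ) (g : R2) : R2 :=
  C (-(lam ^ i / a)) * (C 2⁻¹ * X 1 - C b) * (C 2⁻¹ * X 1 + C b + 1) * sh (i : ℂ) 2 g

/-- Action of `h_i`. -/
noncomputable def opH (lam : ℂ) (i : ℤ) (g : R2) : R2 :=
  C (lam ^ i) * X 1 * sh (i : ℂ) 0 g

/-- Action of `d_i`. -/
noncomputable def opD (lam c : ℂ) (i : ℤ) (g : R2) : R2 :=
  C (lam ^ i) * (X 0 + C ((i : ℂ) * c)) * sh (i : ℂ) 0 g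
/-- Action of `e_i` in `Δ(λ,α,β,γ)`. -/
noncomputable def deE (lam a b : ℂ) (i : ℤ) (g : R2) : R2 :=
  C (-(lam ^ i / a)) * (C 2⁻¹ * X 1 + C b) * (C 2⁻¹ * X 1 - C b - 1) * sh (i : ℂ) (-2) g

/-- Action of `f_i` in `Δ(λ,α,β,γ)`. -/
noncomputable def deF (lam a : ℂ) (i : ℤ) (g : R2) : R2 :=
  C (lam ^ i * a) * sh (i : ℂ) 2 g

lemma aeval_eq_eval' (x : Fin 2 → ℂ) (g : R2) : aeval x g = eval x g := rfl

lemma eval_sh (u v : ℂ) (x : Fin 2 → ℂ) (g : R2) :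
    eval x (sh u v g) = eval ![x 0 - u, x 1 + v] g := by
  have h1 : eval x (sh u v g)
      = ((aeval x : R2 →ₐ[ℂ] ℂ).comp (aeval ![X 0 - C u, X 1 + C v])) g := rfl
  rw [h1, MvPolynomial.comp_aeval]
  have hfun : (fun i => aeval x (![X 0 - C u, X 1 + C v] i)) = ![x 0 - u, x 1 + v] := by
    funext i; fin_cases i <;> simp
  rw [hfun, aeval_eq_eval']

open Polynomial in
lemma eval_maeval (f : Fin 2 → ℂ[X]) (g : R2) (z : ℂ) :
    Polynomial.eval z (MvPolynomial.aeval f g)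
      = eval (fun i => Polynomial.eval z (f i)) g := by
  have h1 : Polynomial.eval z (MvPolynomial.aeval f g)
      = ((Polynomial.aeval z : ℂ[X] →ₐ[ℂ] ℂ).comp (MvPolynomial.aeval f)) g := by
    simp [Polynomial.coe_aeval_eq_eval]
  rw [h1, MvPolynomial.comp_aeval]
  have hfun : (fun i => Polynomial.aeval z (f i)) = (fun i => Polynomial.eval z (f i)) := by
    funext i; exact congrFun (Polynomial.coe_aeval_eq_eval z) (f i)
  rw [hfun, aeval_eq_eval']

lemma sh_zero_zero (g : R2) : sh 0 0 g = g := by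
  have hfun : (![X 0 - C 0, X 1 + C 0] : Fin 2 → R2) = X := by
    funext i; fin_cases i <;> simp
  show aeval ![X 0 - C 0, X 1 + C 0] g = g
  rw [hfun]
  exact MvPolynomial.aeval_X_left_apply g

lemma main_simple (v : ℂ) (hv : v ≠ 0) (W : Submodule ℂ R2)
    (hX0 : ∀ g ∈ W, X 0 * g ∈ W) (hX1 : ∀ g ∈ W, X 1 * g ∈ W)
    (hsh : ∀ i : ℤ, ∀ g ∈ W, sh (i : ℂ) v g ∈ W) :
    W = ⊥ ∨ W = ⊤ := by
  rcases eq_or_ne W ⊥ with hbot | hbot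
  · exact Or.inl hbot
  right
  obtain ⟨g₀, hg₀W, hg₀⟩ := (Submodule.ne_bot_iff W).mp hbot
  have hmul : ∀ r : R2, ∀ g ∈ W, r * g ∈ W := by
    intro r
    induction r using MvPolynomial.induction_on with
    | C a => intro g hg; rw [← smul_eq_C_mul]; exact W.smul_mem a hg
    | add p q hp hq => intro g hg; rw [add_mul]; exact W.add_mem (hp g hg) (hq g hg)
    | mul_X p i hp =>
        intro g hg
        rw [mul_assoc]
        refine hp _ ?_
        fin_cases i
        · exact hX0 g hg
        · exact hX1 g hg
  set I : Ideal R2 :=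
    { carrier := (W : Set R2)
      add_mem' := fun ha hb => W.add_mem ha hb
      zero_mem' := W.zero_mem
      smul_mem' := fun r {g} hg => by simpa [smul_eq_mul] using hmul r g hg } with hI
  have key : ∀ x : Fin 2 → ℂ, ¬ (∀ g ∈ W, eval x g = 0) := by
    intro x hx
    have line : ∀ z : Fin 2 → ℂ, (∀ g ∈ W, eval z g = 0) →
        ∀ y0 : ℂ, ∀ g ∈ W, eval ![y0, z 1 + v] g = 0 := by
      intro z hz y0 g hg
      set q : Polynomial ℂ := MvPolynomial.aeval ![Polynomial.X, Polynomial.C (z 1 + v)] g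
        with hqdef
      have hqeval : ∀ w : ℂ, Polynomial.eval w q = eval ![w, z 1 + v] g := by
        intro w
        rw [hqdef, eval_maeval]
        have hfun : (fun i => Polynomial.eval w
            ((![Polynomial.X, Polynomial.C (z 1 + v)] : Fin 2 → Polynomial ℂ) i))
            = ![w, z 1 + v] := by
          funext i; fin_cases i <;> simp
        rw [hfun]
      have hroots : ∀ n : ℕ, q.IsRoot (z 0 - ((n : ℤ) : ℂ)) := by
        intro n
        have h1 : eval z (sh ((n : ℤ) : ℂ) v g) = 0 := hz _ (hsh n g hg)
        rw [eval_sh] at h1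
        simpa [Polynomial.IsRoot, hqeval] using h1
      have hq0 : q = 0 := by
        apply Polynomial.eq_zero_of_infinite_isRoot
        apply Set.infinite_of_injective_forall_mem
          (f := fun n : ℕ => z 0 - ((n : ℤ) : ℂ)) ?_ ?_
        · intro m n h
          have h2 : ((m : ℤ) : ℂ) = ((n : ℤ) : ℂ) := by
            have := sub_right_injective h
            exact this
          exact_mod_cast h2
        · intro n; exact hroots n
      have := hqeval y0
      rw [hq0, Polynomial.eval_zero] at this
      exact this.symm
    have lines : ∀ k : ℕ, ∀ y0 : ℂ, ∀ g ∈ W, eval ![y0, x 1 + ((k : ℂ) + 1) * v] g = 0 := by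
      intro k
      induction k with
      | zero =>
          intro y0 g hg
          have := line x hx y0 g hg
          simpa using this
      | succ k ih =>
          intro y0 g hg
          have h2 := line ![0, x 1 + ((k : ℂ) + 1) * v] (fun g hg => ih 0 g hg) y0 g hg
          simp only [Matrix.cons_val_one, Matrix.head_cons] at h2
          have harg : x 1 + (((k : ℕ) + 1 : ℕ) + 1 : ℂ) * v
              = (x 1 + ((k : ℂ) + 1) * v) + v := by push_cast; ring
          rw [show ((((k : ℕ) + 1 : ℕ) : ℂ) + 1) * v = ((((k : ℕ) + 1 : ℕ) + 1 : ℂ)) * v by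
            push_cast; ring, harg]
          exact h2
    apply hg₀
    have hz : ∀ y : Fin 2 → ℂ, eval y g₀ = 0 := by
      intro y
      set r : Polynomial ℂ := MvPolynomial.aeval ![Polynomial.C (y 0), Polynomial.X] g₀
        with hrdef
      have hreval : ∀ w : ℂ, Polynomial.eval w r = eval ![y 0, w] g₀ := by
        intro w
        rw [hrdef, eval_maeval]
        have hfun : (fun i => Polynomial.eval w
            ((![Polynomial.C (y 0), Polynomial.X] : Fin 2 → Polynomial ℂ) i))
            = ![y 0, w] := by
          funext i; fin_cases i <;> simp
        rw [hfun]
      have hr0 : r = 0 := by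
        apply Polynomial.eq_zero_of_infinite_isRoot
        apply Set.infinite_of_injective_forall_mem
          (f := fun k : ℕ => x 1 + ((k : ℂ) + 1) * v) ?_ ?_
        · intro m n h
          have h2 : ((m : ℂ) + 1) * v = ((n : ℂ) + 1) * v := by
            have := add_right_injective _ h
            exact this
          have h3 := mul_right_cancel₀ hv h2
          have h4 : (m : ℂ) = n := by linear_combination h3
          exact_mod_cast h4
        · intro k
          simp only [Polynomial.IsRoot, hreval]
          exact lines k (y 0) g₀ hg₀W
      have hvec : ![y 0, y 1] = y := by
        funext i; fin_cases i <;> rfl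
      have hy : eval y g₀ = eval ![y 0, y 1] g₀ := by rw [hvec]
      rw [hy, ← hreval, hr0, Polynomial.eval_zero]
    exact MvPolynomial.funext fun y => by rw [hz y, map_zero]
  have hone : (1 : R2) ∈ I.radical := by
    rw [← MvPolynomial.vanishingIdeal_zeroLocus_eq_radical (K := ℂ) I]
    rw [MvPolynomial.mem_vanishingIdeal_iff]
    intro x hx
    exact absurd (fun g hg => (MvPolynomial.mem_zeroLocus_iff).mp hx g hg) (key x)
  obtain ⟨n, hn⟩ := hone
  rw [one_pow] at hn
  have h1W : (1 : R2) ∈ W := hn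
  apply Submodule.eq_top_iff'.mpr
  intro g
  simpa using hmul g 1 h1W

/-- Ω(λ,α,β,γ) and Δ(λ,α,β,γ) are simple for all λ,α ∈ ℂ*, β,γ ∈ ℂ: every ℂ-subspace
invariant under all operators e_i, f_i, h_i, d_i (C acts as 0) is ⊥ or ⊤. -/
theorem stmt10 (lam a : ℂ) (hlam : lam ≠ 0) (ha : a ≠ 0) (b c : ℂ) :
    (∀ W : Submodule ℂ R2,
      (∀ i : ℤ, ∀ g ∈ W, omE lam a i g ∈ W) →
      (∀ i : ℤ, ∀ g ∈ W, omF lam a b i g ∈ W) →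
      (∀ i : ℤ, ∀ g ∈ W, opH lam i g ∈ W) →
      (∀ i : ℤ, ∀ g ∈ W, opD lam c i g ∈ W) →
      W = ⊥ ∨ W = ⊤) ∧
    (∀ W : Submodule ℂ R2,
      (∀ i : ℤ, ∀ g ∈ W, deE lam a b i g ∈ W) →
      (∀ i : ℤ, ∀ g ∈ W, deF lam a i g ∈ W) →
      (∀ i : ℤ, ∀ g ∈ W, opH lam i g ∈ W) →
      (∀ i : ℤ, ∀ g ∈ W, opD lam c i g ∈ W) →
      W = ⊥ ∨ W = ⊤) := by
  have hne : ∀ i : ℤ, lam ^ i * a ≠ 0 := fun i => mul_ne_zero (zpow_ne_zero _ hlam) ha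
  constructor
  · intro W hE _hF hH hD
    apply main_simple (-2) (by norm_num) W
    · intro g hg
      simpa [opD, sh_zero_zero] using hD 0 g hg
    · intro g hg
      simpa [opH, sh_zero_zero] using hH 0 g hg
    · intro i g hg
      have h := hE i g hg
      have h2 : sh (i : ℂ) (-2) g = (lam ^ i * a)⁻¹ • omE lam a i g := by
        rw [omE, ← smul_eq_C_mul, smul_smul, inv_mul_cancel₀ (hne i), one_smul]
      rw [h2]; exact W.smul_mem _ h
  · intro W _hE hF hH hD
    apply main_simple 2 (by norm_num) W
    · intro g hg
      simpa [opD, sh_zero_zero] using hD 0 g hg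
    · intro g hg
      simpa [opH, sh_zero_zero] using hH 0 g hg
    · intro i g hg
      have h := hF i g hg
      have h2 : sh (i : ℂ) 2 g = (lam ^ i * a)⁻¹ • deF lam a i g := by
        rw [deF, ← smul_eq_C_mul, smul_smul, inv_mul_cancel₀ (hne i), one_smul]
      rw [h2]; exact W.smul_mem _ h
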